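/- arXiv:2011.02741 — 2 statements merged into one kernel-verified Lean document; each statement's English description precedes it below -/
import Mathlib

section
/- Let (X, G, Φ) be a dynamical system where X is a compact totally disconnected Hausdorff space. Then (X, G, Φ) is minimal if and only if (X, G, Φ) is conjugate to the inverse limit of an inverse system of dynamical systems, satisfying the Mittag-Leffler condition, each of whose terms is a minimal subshift (a closed shift-invariant subset of a full shift over some finite alphabet, with the shift G-action). -/
open Set

universe u

/-! ### Dynamical systems: actions of a countable discrete group by homeomorphisms -/

/-- An action of a group `G` on a topological space `X`: each `act g` is a homeomorphism
(continuity of the inverse follows from `act g⁻¹`). -/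
structure DynAction (G X : Type u) [Group G] [TopologicalSpace X] where
  act : G → X → X
  continuous_act : ∀ g : G, Continuous (act g)
  act_one : ∀ x : X, act 1 x = x
  act_mul : ∀ (g g' : G) (x : X), act (g * g') x = act g (act g' x)

section Covers

variable {G X : Type u} [Group G] [TopologicalSpace X]

/-- A finite open cover of `X`. -/
def IsFOC (𝒰 : Finset (Set X)) : Prop :=
  (∀ U ∈ 𝒰, IsOpen U) ∧ ⋃₀ (𝒰 : Set (Set X)) = Set.univ

/-- A finite partition of `X` into nonempty clopen sets. -/
def IsClopenPartition (𝒰 : Finset (Set X)) : Prop :=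
  (∀ U ∈ 𝒰, IsClopen U ∧ U.Nonempty) ∧ ⋃₀ (𝒰 : Set (Set X)) = Set.univ ∧
    ∀ U ∈ 𝒰, ∀ V ∈ 𝒰, U ≠ V → U ∩ V = ∅

/-- `𝒱` refines `𝒰`: every member of `𝒱` is contained in a member of `𝒰`. -/
def Refines (𝒱 𝒰 : Finset (Set X)) : Prop :=
  ∀ V ∈ 𝒱, ∃ U ∈ 𝒰, V ⊆ U

/-- `{U g}` is a pattern of the `(S,𝒰)`-pseudo-orbit `{x g}`:
all `U g` belong to `𝒰`, and `x (s*g) ∈ U (s*g)` and `Φ_s (x g) ∈ U (s*g)`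
for all `g ∈ G`, `s ∈ S`. -/
def IsPseudoOrbitPattern (Φ : DynAction G X) (S : Set G) (𝒰 : Finset (Set X))
    (x : G → X) (U : G → Set X) : Prop :=
  (∀ g : G, U g ∈ 𝒰) ∧
    ∀ g : G, ∀ s ∈ S, x (s * g) ∈ U (s * g) ∧ Φ.act s (x g) ∈ U (s * g)

/-- `{x g}` is an `(S,𝒰)`-pseudo-orbit. -/
def IsPseudoOrbit (Φ : DynAction G X) (S : Set G) (𝒰 : Finset (Set X)) (x : G → X) : Prop :=
  ∃ U : G → Set X, IsPseudoOrbitPattern Φ S 𝒰 x U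

/-- `z` `𝒰`-shadows the family `{x g}`. -/
def Shadows (Φ : DynAction G X) (𝒰 : Finset (Set X)) (z : X) (x : G → X) : Prop :=
  ∀ g : G, ∃ U ∈ 𝒰, Φ.act g z ∈ U ∧ x g ∈ U

/-- The (topological) `S`-shadowing property. -/
def ShadowingProperty (Φ : DynAction G X) (S : Set G) : Prop :=
  ∀ 𝒰 : Finset (Set X), IsFOC 𝒰 → ∃ 𝒱 : Finset (Set X), IsFOC 𝒱 ∧
    ∀ x : G → X, IsPseudoOrbit Φ S 𝒱 x → ∃ z : X, Shadows Φ 𝒰 z x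

/-! ### Equivariant maps, factor maps, conjugacies -/

def IsEquivariant {Y : Type u} [TopologicalSpace Y]
    (ΦX : DynAction G X) (ΦY : DynAction G Y) (f : X → Y) : Prop :=
  ∀ (g : G) (x : X), f (ΦX.act g x) = ΦY.act g (f x)

/-- `f` is a factor map from `(X,G,ΦX)` onto `(Y,G,ΦY)`. -/
def IsFactorMap {Y : Type u} [TopologicalSpace Y]
    (ΦX : DynAction G X) (ΦY : DynAction G Y) (f : X → Y) : Prop :=
  Continuous f ∧ Function.Surjective f ∧ IsEquivariant ΦX ΦY f

/-- `f` is a conjugacy (bijective factor map). -/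
def IsConjugacy {Y : Type u} [TopologicalSpace Y]
    (ΦX : DynAction G X) (ΦY : DynAction G Y) (f : X → Y) : Prop :=
  Continuous f ∧ Function.Bijective f ∧ IsEquivariant ΦX ΦY f

end Covers

/-! ### Shifts, subshifts, shifts of finite type -/

/-- The shift action on `A^G`: `(σ_g x) h = x (h * g)`. -/
def shift (G A : Type u) [Group G] (g : G) (x : G → A) : G → A :=
  fun h => x (h * g)

/-- The full shift `A^G` (product topology) as a dynamical system. -/
def shiftDyn (G A : Type u) [Group G] [TopologicalSpace A] : DynAction G (G → A) where
  act := shift G A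
  continuous_act g := continuous_pi fun h => continuous_apply (h * g)
  act_one x := by funext h; simp [shift]
  act_mul g g' x := by funext h; simp [shift, mul_assoc]

/-- A subshift: a closed shift-invariant subset of the full shift `A^G`. -/
def IsSubshift {G A : Type u} [Group G] [TopologicalSpace A] (Y : Set (G → A)) : Prop :=
  IsClosed Y ∧ ∀ g : G, ∀ x ∈ Y, shift G A g x ∈ Y

/-- The cylinder set determined by the values of `P` on the finite shape `B`. -/
def cylinder {G A : Type u} (B : Finset G) (P : G → A) : Set (G → A) :=
  {y | ∀ b ∈ B, y b = P b}

/-- The language of `Y ⊆ A^G` over the finite shape `B` (a pattern is recorded by any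
function `G → A` with the prescribed values on `B`). -/
def language {G A : Type u} (B : Finset G) (Y : Set (G → A)) : Set (G → A) :=
  {P | (cylinder B P ∩ Y).Nonempty}

/-- `Y` is a shift of finite type over the finite shape `B`: it is cut out by a family of
forbidden patterns on `B`. -/
def IsSFTOver {G A : Type u} [Group G] (B : Finset G) (Y : Set (G → A)) : Prop :=
  ∃ ℱ : Set (G → A), Y = {x | ∀ g : G, ∀ P ∈ ℱ, shift G A g x ∉ cylinder B P}

/-- The shift action restricted to a subshift. -/
def subshiftDyn {G A : Type u} [Group G] [TopologicalSpace A] (Y : Set (G → A))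
    (hY : IsSubshift Y) : DynAction G ↥Y where
  act g x := ⟨shift G A g x.1, hY.2 g x.1 x.2⟩
  continuous_act g := Continuous.subtype_mk
    ((continuous_pi fun h => continuous_apply (h * g)).comp continuous_subtype_val) _
  act_one x := by apply Subtype.ext; funext h; simp [shift]
  act_mul g g' x := by apply Subtype.ext; funext h; simp [shift, mul_assoc]

/-! ### Hitting time sets and mixing-type properties -/

section Mixing

variable {G X : Type u} [Group G] [TopologicalSpace X]

/-- The hitting time set `N(U,V) = {g ≠ e : U ∩ Φ_{g⁻¹}(V) ≠ ∅}`. -/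
def hittingTimes (Φ : DynAction G X) (U V : Set X) : Set G :=
  {g : G | g ≠ 1 ∧ (U ∩ Φ.act g⁻¹ '' V).Nonempty}

/-- Topological mixing: `G \ N(U,V)` is finite for all nonempty open `U, V`. -/
def IsMixing (Φ : DynAction G X) : Prop :=
  ∀ U V : Set X, IsOpen U → IsOpen V → U.Nonempty → V.Nonempty →
    ((hittingTimes Φ U V)ᶜ : Set G).Finite

/-- Minimality: there is no nonempty proper closed invariant subset. -/
def IsMinimal (Φ : DynAction G X) : Prop :=
  ∀ K : Set X, IsClosed K → (∀ g : G, ∀ x ∈ K, Φ.act g x ∈ K) →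
    K = ∅ ∨ K = Set.univ

end Mixing

/-! ### Inverse systems of subshifts -/

/-- An inverse system of dynamical systems whose terms are subshifts over finite
(discrete) alphabets, with the shift `G`-action. -/
structure SubshiftInvSys (G : Type u) [Group G] (Λ : Type u) [Preorder Λ] where
  A : Λ → Type u
  [topoA : ∀ l, TopologicalSpace (A l)]
  [discA : ∀ l, DiscreteTopology (A l)]
  [finA : ∀ l, Finite (A l)]
  Y : ∀ l : Λ, Set (G → A l)
  subshift : ∀ l : Λ, IsSubshift (Y l)
  bond : ∀ {l m : Λ}, l ≤ m → ↥(Y m) → ↥(Y l)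
  bond_cont : ∀ {l m : Λ} (h : l ≤ m), Continuous (bond h)
  bond_refl : ∀ (l : Λ) (x : ↥(Y l)), bond (le_refl l) x = x
  bond_comp : ∀ {l m n : Λ} (h1 : l ≤ m) (h2 : m ≤ n) (x : ↥(Y n)),
    bond h1 (bond h2 x) = bond (h1.trans h2) x
  bond_equivariant : ∀ {l m : Λ} (h : l ≤ m) (g : G) (x : ↥(Y m)),
    (subshiftDyn (Y l) (subshift l)).act g (bond h x)
      = bond h ((subshiftDyn (Y m) (subshift m)).act g x)

namespace SubshiftInvSys

variable {G Λ : Type u} [Group G] [Preorder Λ]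

instance (𝒮 : SubshiftInvSys G Λ) (l : Λ) : TopologicalSpace (𝒮.A l) := 𝒮.topoA l
instance (𝒮 : SubshiftInvSys G Λ) (l : Λ) : DiscreteTopology (𝒮.A l) := 𝒮.discA l
instance (𝒮 : SubshiftInvSys G Λ) (l : Λ) : Finite (𝒮.A l) := 𝒮.finA l

/-- The `G`-action on the term `Y l` (the restricted shift). -/
def termDyn (𝒮 : SubshiftInvSys G Λ) (l : Λ) : DynAction G ↥(𝒮.Y l) :=
  subshiftDyn (𝒮.Y l) (𝒮.subshift l)

/-- The inverse limit of the system, as a subset of the product. -/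
def limitSet (𝒮 : SubshiftInvSys G Λ) : Set (∀ l : Λ, ↥(𝒮.Y l)) :=
  {x | ∀ (l m : Λ) (h : l ≤ m), 𝒮.bond h (x m) = x l}

lemma act_mem_limitSet (𝒮 : SubshiftInvSys G Λ) (g : G) (x : ∀ l : Λ, ↥(𝒮.Y l))
    (hx : x ∈ 𝒮.limitSet) : (fun l => (𝒮.termDyn l).act g (x l)) ∈ 𝒮.limitSet := by
  intro l m h
  show 𝒮.bond h ((𝒮.termDyn m).act g (x m)) = (𝒮.termDyn l).act g (x l)
  rw [show (𝒮.termDyn m).act g (x m)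
        = (subshiftDyn (𝒮.Y m) (𝒮.subshift m)).act g (x m) from rfl,
      ← 𝒮.bond_equivariant h g (x m)]
  show (𝒮.termDyn l).act g (𝒮.bond h (x m)) = _
  rw [hx l m h]

/-- The induced `G`-action `σ*` on the inverse limit. -/
def limitDyn (𝒮 : SubshiftInvSys G Λ) : DynAction G ↥𝒮.limitSet where
  act g x := ⟨fun l => (𝒮.termDyn l).act g (x.1 l), 𝒮.act_mem_limitSet g x.1 x.2⟩
  continuous_act g := Continuous.subtype_mk
    (continuous_pi fun l => ((𝒮.termDyn l).continuous_act g).comp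
      ((continuous_apply l).comp continuous_subtype_val)) _
  act_one x := by
    apply Subtype.ext; funext l
    exact (𝒮.termDyn l).act_one (x.1 l)
  act_mul g g' x := by
    apply Subtype.ext; funext l
    exact (𝒮.termDyn l).act_mul g g' (x.1 l)

/-- The Mittag-Leffler condition. -/
def ML (𝒮 : SubshiftInvSys G Λ) : Prop :=
  ∀ l : Λ, ∃ m : Λ, ∃ h : l ≤ m, ∀ (n : Λ) (h' : m ≤ n),
    Set.range (𝒮.bond (h.trans h')) = Set.range (𝒮.bond h)

end SubshiftInvSys

/-- An inverse system of subshifts over some directed index set, packaged together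
with its (directed, preordered) index. -/
structure SubshiftInvSysPkg (G : Type u) [Group G] where
  Idx : Type u
  [pre : Preorder Idx]
  directed : IsDirected Idx (· ≤ ·)
  sys : SubshiftInvSys G Idx

namespace SubshiftInvSysPkg

variable {G : Type u} [Group G]

instance (P : SubshiftInvSysPkg G) : Preorder P.Idx := P.pre

end SubshiftInvSysPkg


/-! ### Auxiliary material for the proof -/

section AuxProof

variable {G X : Type} [Group G] [TopologicalSpace X]

lemma isMinimal_of_isFactorMap {Y : Type} [TopologicalSpace Y] {ΦX : DynAction G X}
    {ΦY : DynAction G Y} {f : X → Y} (hf : IsFactorMap ΦX ΦY f) (h : IsMinimal ΦX) :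
    IsMinimal ΦY := by
  intro K hK hKinv
  rcases h (f ⁻¹' K) (hK.preimage hf.1) (fun g x hx => by
      show f (ΦX.act g x) ∈ K
      rw [hf.2.2 g x]; exact hKinv g (f x) hx) with h0 | h1
  · left
    ext y; simp only [Set.mem_empty_iff_false, iff_false]
    intro hy
    obtain ⟨x, rfl⟩ := hf.2.1 y
    have : x ∈ f ⁻¹' K := hy
    simp [h0] at this
  · right
    ext y; simp only [Set.mem_univ, iff_true]
    obtain ⟨x, rfl⟩ := hf.2.1 y
    have : x ∈ f ⁻¹' K := by rw [h1]; trivial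
    exact this

lemma isMinimal_of_isConjugacy {Y : Type} [TopologicalSpace Y] [CompactSpace X] [T2Space Y]
    {ΦX : DynAction G X} {ΦY : DynAction G Y} {f : X → Y} (hf : IsConjugacy ΦX ΦY f)
    (h : IsMinimal ΦY) : IsMinimal ΦX := by
  intro K hK hKinv
  rcases h (f '' K) ((hK.isCompact.image hf.1).isClosed)
      (by rintro g _ ⟨x, hx, rfl⟩
          exact ⟨ΦX.act g x, hKinv g x hx, hf.2.2 g x⟩) with h0 | h1
  · left
    by_contra hne
    obtain ⟨x, hx⟩ := Set.nonempty_iff_ne_empty.2 hne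
    have : f x ∈ f '' K := Set.mem_image_of_mem f hx
    simp [h0] at this
  · right
    ext x; simp only [Set.mem_univ, iff_true]
    have : f x ∈ f '' K := by rw [h1]; trivial
    obtain ⟨x', hx', hfx⟩ := this
    rwa [hf.2.1.1 hfx] at hx'

/-- The index set for the forward construction: finite sets of clopen subsets of `X`. -/
abbrev ClopIdx (X : Type) [TopologicalSpace X] := Finset {U : Set X // IsClopen U}

open Classical in
/-- The itinerary map attached to a finite set of clopen sets. -/
noncomputable def itin (Φ : DynAction G X) (S : ClopIdx X) (x : X) : G → (↥S → Bool) :=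
  fun g U => decide (Φ.act g x ∈ U.1.1)

open Classical in
lemma continuous_decide_mem {U : Set X} (hU : IsClopen U) :
    Continuous (fun x => decide (x ∈ U)) := by
  rw [continuous_discrete_rng]
  intro b
  cases b
  · convert hU.compl.2 using 1
    ext x; simp [decide_eq_false_iff_not]
  · convert hU.2 using 1
    ext x; simp

lemma continuous_itin (Φ : DynAction G X) (S : ClopIdx X) : Continuous (itin Φ S) := by
  apply continuous_pi; intro g; apply continuous_pi; intro U
  exact (continuous_decide_mem U.1.2).comp (Φ.continuous_act g)

lemma itin_shift (Φ : DynAction G X) (S : ClopIdx X) (g : G) (x : X) :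
    shift G (↥S → Bool) g (itin Φ S x) = itin Φ S (Φ.act g x) := by
  funext h U
  unfold shift itin
  rw [Φ.act_mul]

/-- The itinerary subshift. -/
noncomputable def itinY (Φ : DynAction G X) (S : ClopIdx X) : Set (G → (↥S → Bool)) :=
  Set.range (itin Φ S)

lemma isSubshift_itinY [CompactSpace X] (Φ : DynAction G X) (S : ClopIdx X) :
    IsSubshift (itinY Φ S) := by
  constructor
  · have : itinY Φ S = itin Φ S '' Set.univ := by
      rw [Set.image_univ]; rfl
    rw [this]
    exact (isCompact_univ.image (continuous_itin Φ S)).isClosed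
  · rintro g _ ⟨x, rfl⟩
    rw [itin_shift]
    exact ⟨_, rfl⟩

/-- Restriction of labels to a smaller set of clopen sets. -/
def resMap {S T : ClopIdx X} (h : S ≤ T) (y : G → (↥T → Bool)) : G → (↥S → Bool) :=
  fun g U => y g ⟨U.1, h U.2⟩

lemma resMap_itin (Φ : DynAction G X) {S T : ClopIdx X} (h : S ≤ T) (x : X) :
    resMap h (itin Φ T x) = itin Φ S x := rfl

/-- The inverse system of itinerary subshifts. -/
noncomputable def minSys [CompactSpace X] (Φ : DynAction G X) :
    SubshiftInvSys G (ClopIdx X) where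
  A S := ↥S → Bool
  Y S := itinY Φ S
  subshift S := isSubshift_itinY Φ S
  bond {S T} h y := ⟨resMap h y.1, by
    obtain ⟨x, hx⟩ := y.2
    exact ⟨x, by rw [← hx]; rfl⟩⟩
  bond_cont {S T} h := by
    apply Continuous.subtype_mk
    apply continuous_pi; intro g; apply continuous_pi; intro U
    exact (continuous_apply _).comp ((continuous_apply g).comp continuous_subtype_val)
  bond_refl S x := Subtype.ext rfl
  bond_comp h1 h2 x := Subtype.ext rfl
  bond_equivariant h g x := Subtype.ext rfl

lemma minSys_bond_surjective [CompactSpace X] (Φ : DynAction G X) {S T : ClopIdx X}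
    (h : S ≤ T) : Function.Surjective ((minSys Φ).bond h) := by
  rintro ⟨y, hy⟩
  obtain ⟨x, rfl⟩ := hy
  exact ⟨⟨itin Φ T x, ⟨x, rfl⟩⟩, Subtype.ext rfl⟩

lemma isFactorMap_itin [CompactSpace X] (Φ : DynAction G X) (S : ClopIdx X) :
    IsFactorMap Φ ((minSys Φ).termDyn S) (fun x => (⟨itin Φ S x, ⟨x, rfl⟩⟩ : ↥(itinY Φ S))) := by
  refine ⟨Continuous.subtype_mk (continuous_itin Φ S) _, ?_, ?_⟩
  · rintro ⟨y, hy⟩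
    obtain ⟨x, rfl⟩ := hy
    exact ⟨x, rfl⟩
  · intro g x
    exact Subtype.ext (itin_shift Φ S g x).symm

/-- The limit set of an inverse system of subshifts is closed. -/
lemma limitSet_isClosed {Λ : Type} [Preorder Λ] (𝒮 : SubshiftInvSys G Λ) :
    IsClosed 𝒮.limitSet := by
  have : 𝒮.limitSet = ⋂ (l) (m) (h : l ≤ m), {x : ∀ l : Λ, ↥(𝒮.Y l) | 𝒮.bond h (x m) = x l} := by
    ext x
    simp only [SubshiftInvSys.limitSet, Set.mem_iInter, Set.mem_setOf_eq]
  rw [this]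
  exact isClosed_iInter fun l => isClosed_iInter fun m => isClosed_iInter fun h =>
    isClosed_eq ((𝒮.bond_cont h).comp (continuous_apply m)) (continuous_apply l)

/-- The inverse limit of a directed system of minimal subshifts is minimal. -/
lemma limitDyn_isMinimal {Λ : Type} [Preorder Λ] (hdir : IsDirected Λ (· ≤ ·))
    (𝒮 : SubshiftInvSys G Λ) (hmin : ∀ l, IsMinimal (𝒮.termDyn l)) :
    IsMinimal 𝒮.limitDyn := by
  haveI hYc : ∀ l, CompactSpace ↥(𝒮.Y l) := fun l =>
    isCompact_iff_compactSpace.mp ((𝒮.subshift l).1.isCompact)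
  haveI : CompactSpace ↥𝒮.limitSet :=
    isCompact_iff_compactSpace.mp (limitSet_isClosed 𝒮).isCompact
  intro K hK hKinv
  rcases K.eq_empty_or_nonempty with h0 | ⟨k0, hk0⟩
  · left; exact h0
  right
  rw [Set.eq_univ_iff_forall]
  intro z
  by_cases hΛ : Nonempty Λ
  case neg =>
    have : k0 = z := Subtype.ext (funext fun l => absurd ⟨l⟩ hΛ)
    rwa [← this]
  -- projections of K are everything
  have hproj : ∀ l, ∃ k ∈ K, k.1 l = z.1 l := by
    intro l
    set T : Set ↥(𝒮.Y l) := (fun k : ↥𝒮.limitSet => k.1 l) '' K with hT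
    have hTc : IsCompact T :=
      hK.isCompact.image ((continuous_apply l).comp continuous_subtype_val)
    have hinv : ∀ g : G, ∀ y ∈ T, (𝒮.termDyn l).act g y ∈ T := by
      rintro g _ ⟨k, hk, rfl⟩
      exact ⟨𝒮.limitDyn.act g k, hKinv g k hk, rfl⟩
    rcases hmin l T hTc.isClosed hinv with hT0 | hT1
    · exfalso
      have : k0.1 l ∈ T := ⟨k0, hk0, rfl⟩
      simp [hT0] at this
    · have : z.1 l ∈ T := by rw [hT1]; trivial
      obtain ⟨k, hk, hkl⟩ := this
      exact ⟨k, hk, hkl⟩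
  -- intersect the fibers over a directed family
  set C : Λ → Set ↥𝒮.limitSet := fun l => K ∩ {k | k.1 l = z.1 l} with hC
  have hCcl : ∀ l, IsClosed (C l) :=
    fun l => hK.inter (isClosed_eq ((continuous_apply l).comp continuous_subtype_val)
      continuous_const)
  have hCne : ∀ l, (C l).Nonempty := by
    intro l
    obtain ⟨k, hk, hkl⟩ := hproj l
    exact ⟨k, hk, hkl⟩
  have hCdir : Directed (· ⊇ ·) C := by
    intro l m
    obtain ⟨n, hln, hmn⟩ := hdir.directed l m
    have key : ∀ (j : Λ) (hj : j ≤ n), C n ⊆ C j := by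
      intro j hj k hk
      refine ⟨hk.1, ?_⟩
      show k.1 j = z.1 j
      rw [← k.2 j n hj, hk.2, z.2 j n hj]
    exact ⟨n, key l hln, key m hmn⟩
  haveI : Nonempty Λ := hΛ
  obtain ⟨k, hk⟩ := IsCompact.nonempty_iInter_of_directed_nonempty_isCompact_isClosed
    C hCdir hCne (fun l => (hCcl l).isCompact) hCcl
  simp only [Set.mem_iInter] at hk
  have hkz : k = z := Subtype.ext (funext fun l => (hk l).2)
  rw [← hkz]
  exact (hk hΛ.some).1

end AuxProof

/-- **Theorem 1.4 (minimal case).** For a compact totally disconnected Hausdorff space,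
`Φ` is minimal iff `(X,G,Φ)` is conjugate to the inverse limit of an ML inverse system of
minimal subshifts. -/
theorem minimal_iff_conjugate_invlim_minimal_subshifts
    {G X : Type} [Group G] [Countable G] [TopologicalSpace X]
    [CompactSpace X] [T2Space X] [TotallyDisconnectedSpace X]
    (Φ : DynAction G X) :
    IsMinimal Φ ↔
      ∃ P : SubshiftInvSysPkg G,
        P.sys.ML ∧
        (∀ l : P.Idx, IsMinimal (P.sys.termDyn l)) ∧
        ∃ f : X → ↥P.sys.limitSet, IsConjugacy Φ P.sys.limitDyn f := by
  classical
  constructor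
  · -- forward direction: build the system of itinerary subshifts
    intro hmin
    refine ⟨⟨ClopIdx X, inferInstance, minSys Φ⟩, ?_, ?_, ?_⟩
    · -- Mittag-Leffler: all bonding maps are surjective
      intro l
      refine ⟨l, le_refl l, fun n h' => ?_⟩
      rw [Set.range_eq_univ.mpr (minSys_bond_surjective Φ _),
        Set.range_eq_univ.mpr (minSys_bond_surjective Φ _)]
    · -- each term is minimal, being a factor of the minimal system X
      intro l
      exact isMinimal_of_isFactorMap (isFactorMap_itin Φ l) hmin
    · -- the conjugacy
      refine ⟨fun x => ⟨fun S => ⟨itin Φ S x, ⟨x, rfl⟩⟩, fun l m h => Subtype.ext rfl⟩,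
        ?_, ⟨?_, ?_⟩, ?_⟩
      · -- continuity
        exact Continuous.subtype_mk (continuous_pi fun S =>
          Continuous.subtype_mk (continuous_itin Φ S) _) _
      · -- injectivity
        intro x y hxy
        by_contra hne
        obtain ⟨U, hU, hxU, hyU⟩ := exists_isClopen_of_totally_separated hne
        set S : ClopIdx X := {⟨U, hU⟩} with hS
        have hmem : (⟨U, hU⟩ : {U : Set X // IsClopen U}) ∈ S := Finset.mem_singleton_self _
        have := congrArg (fun w : ↥(minSys Φ).limitSet =>
          (w.1 S).1 1 ⟨⟨U, hU⟩, hmem⟩) hxy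
        simp only [itin] at this
        rw [Φ.act_one x, Φ.act_one y, decide_eq_decide] at this
        exact hyU (this.mp hxU)
      · -- surjectivity
        intro z
        set C : ClopIdx X → Set X := fun S => {x : X | itin Φ S x = (z.1 S).1} with hC
        have hCcl : ∀ S, IsClosed (C S) :=
          fun S => isClosed_eq (continuous_itin Φ S) continuous_const
        have hCne : ∀ S, (C S).Nonempty := fun S => (z.1 S).2
        have hCdir : Directed (· ⊇ ·) C := by
          intro S T
          have key : ∀ (j : ClopIdx X) (hj : j ≤ S ∪ T), C (S ∪ T) ⊆ C j := by
            intro j hj x hx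
            have hb := congrArg Subtype.val (z.2 j (S ∪ T) hj)
            show itin Φ j x = (z.1 j).1
            calc itin Φ j x = resMap hj (itin Φ (S ∪ T) x) := rfl
              _ = resMap hj (z.1 (S ∪ T)).1 := by rw [hx]
              _ = (show G → (↥j → Bool) from (z.1 j).1) := hb
          exact ⟨S ∪ T, key S Finset.subset_union_left, key T Finset.subset_union_right⟩
        obtain ⟨x, hx⟩ := IsCompact.nonempty_iInter_of_directed_nonempty_isCompact_isClosed
          C hCdir hCne (fun S => (hCcl S).isCompact) hCcl
        simp only [Set.mem_iInter] at hx
        exact ⟨x, Subtype.ext (funext fun S => Subtype.ext (hx S))⟩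
      · -- equivariance
        intro g x
        apply Subtype.ext
        funext S
        exact Subtype.ext (itin_shift Φ S g x).symm
  · -- backward direction
    rintro ⟨P, _hML, hterm, f, hf⟩
    exact isMinimal_of_isConjugacy hf (limitDyn_isMinimal P.directed P.sys hterm)
end

section
/- Let (X, G, Φ) be a dynamical system and let {𝒰_λ}_{λ∈Λ} be a cofinal directed subset of the collection of finite open covers of X (ordered by refinement). Then for any x ∈ X and any choice of U_λ(x) ∈ 𝒰_λ with x ∈ U_λ(x) for each λ ∈ Λ, one has {x} = ∩_{λ∈Λ} U_λ(x), and for each g ∈ G, {Φ_g(x)} = ∩_{λ∈Λ} ⋃{π_{e_G}(σ_g(u)) : u ∈ 𝒪(𝒰_λ), π_{e_G}(u) = U_λ(x)}, where the inner union is taken over the indicated members of 𝒰_λ regarded as subsets of X. -/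
open Set

universe u

/-! ### Orbit spaces and pseudo-orbit spaces of finite covers -/

/-- An element of the finite cover `𝒰`, regarded as a letter of a (discrete) finite
alphabet. -/
structure CoverElt {X : Type u} (𝒰 : Finset (Set X)) where
  val : Set X
  mem : val ∈ 𝒰

instance {X : Type u} (𝒰 : Finset (Set X)) : TopologicalSpace (CoverElt 𝒰) := ⊥
instance {X : Type u} (𝒰 : Finset (Set X)) : DiscreteTopology (CoverElt 𝒰) := ⟨rfl⟩
instance {X : Type u} (𝒰 : Finset (Set X)) : Finite (CoverElt 𝒰) :=
  Finite.of_injective (fun e => (⟨e.val, e.mem⟩ : {U : Set X // U ∈ 𝒰}))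
    (fun a b hab => by cases a; cases b; simpa using hab)

/-- The `𝒰`-orbit space `𝒪(𝒰)`: the closure in the full shift `𝒰^G` of the set of
orbit patterns. -/
def orbitSpace {G X : Type u} [Group G] [TopologicalSpace X]
    (Φ : DynAction G X) (𝒰 : Finset (Set X)) : Set (G → CoverElt 𝒰) :=
  closure {u : G → CoverElt 𝒰 | (⋂ g : G, Φ.act g⁻¹ '' (u g).val).Nonempty}

/-- The `(S,𝒰)`-pseudo-orbit space `𝒫𝒪_S(𝒰)`: all patterns of `(S,𝒰)`-pseudo-orbits. -/
def psOrbitSpace {G X : Type u} [Group G] [TopologicalSpace X]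
    (Φ : DynAction G X) (S : Set G) (𝒰 : Finset (Set X)) : Set (G → CoverElt 𝒰) :=
  {u : G → CoverElt 𝒰 | ∃ x : G → X, IsPseudoOrbitPattern Φ S 𝒰 x (fun g => (u g).val)}

section Aux

variable {G X : Type u} [Group G] [TopologicalSpace X]

lemma DynAction.act_act_inv (Φ : DynAction G X) (g : G) (y : X) :
    Φ.act g (Φ.act g⁻¹ y) = y := by
  rw [← Φ.act_mul, mul_inv_cancel, Φ.act_one]

lemma DynAction.act_inv_act (Φ : DynAction G X) (g : G) (y : X) :
    Φ.act g⁻¹ (Φ.act g y) = y := by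
  rw [← Φ.act_mul, inv_mul_cancel, Φ.act_one]

lemma mem_act_inv_image (Φ : DynAction G X) (g : G) (A : Set X) (w : X) :
    w ∈ Φ.act g⁻¹ '' A ↔ Φ.act g w ∈ A := by
  constructor
  · rintro ⟨y, hy, rfl⟩
    rwa [Φ.act_act_inv]
  · intro h
    exact ⟨Φ.act g w, h, Φ.act_inv_act g w⟩

/-- Key closure fact: any element of the orbit space has, for each `g`, an actual point
witnessing its coordinates at `1` and `g`. -/
lemma orbitSpace_witness (Φ : DynAction G X) (𝒰 : Finset (Set X))
    {u : G → CoverElt 𝒰} (hu : u ∈ orbitSpace Φ 𝒰) (g : G) :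
    ∃ w : X, w ∈ (u 1).val ∧ Φ.act g w ∈ (u g).val := by
  have hopen : IsOpen {v : G → CoverElt 𝒰 | v 1 = u 1 ∧ v g = u g} := by
    have h1 : IsOpen ((fun v : G → CoverElt 𝒰 => v 1) ⁻¹' {u 1}) :=
      (continuous_apply 1).isOpen_preimage _ (isOpen_discrete _)
    have h2 : IsOpen ((fun v : G → CoverElt 𝒰 => v g) ⁻¹' {u g}) :=
      (continuous_apply g).isOpen_preimage _ (isOpen_discrete _)
    exact h1.inter h2
  have := mem_closure_iff.mp hu _ hopen ⟨rfl, rfl⟩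
  obtain ⟨v, ⟨hv1, hvg⟩, ⟨w, hw⟩⟩ := this
  refine ⟨w, ?_, ?_⟩
  · have := mem_iInter.mp hw 1
    rw [hv1] at this
    have := (mem_act_inv_image Φ 1 _ w).mp this
    rwa [Φ.act_one] at this
  · have := mem_iInter.mp hw g
    rw [hvg] at this
    exact (mem_act_inv_image Φ g _ w).mp this

lemma Refines.trans {𝒲 𝒱 𝒰 : Finset (Set X)} (h1 : Refines 𝒲 𝒱) (h2 : Refines 𝒱 𝒰) :
    Refines 𝒲 𝒰 := by
  intro W hW
  obtain ⟨V, hV, hWV⟩ := h1 W hW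
  obtain ⟨U, hU, hVU⟩ := h2 V hV
  exact ⟨U, hU, hWV.trans hVU⟩

end Aux

/-- **Theorem 3.7.** For a cofinal directed family of finite open covers, points and
their orbits are encoded by the orbit spaces of these covers. -/
theorem point_and_orbit_encoded_by_orbitSpaces
    {G X : Type} [Group G] [Countable G] [TopologicalSpace X]
    [CompactSpace X] [T2Space X]
    (Φ : DynAction G X) {Λ : Type} (𝒰 : Λ → Finset (Set X))
    (hFOC : ∀ l : Λ, IsFOC (𝒰 l))
    (hdir : ∀ l m : Λ, ∃ n : Λ, Refines (𝒰 n) (𝒰 l) ∧ Refines (𝒰 n) (𝒰 m))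
    (hcof : ∀ 𝒱 : Finset (Set X), IsFOC 𝒱 → ∃ l : Λ, Refines (𝒰 l) 𝒱)
    (x : X) (U : ∀ l : Λ, Set X) (hUmem : ∀ l : Λ, U l ∈ 𝒰 l)
    (hxU : ∀ l : Λ, x ∈ U l) :
    (⋂ l : Λ, U l) = {x} ∧
    ∀ g : G,
      (⋂ l : Λ, ⋃ u ∈ orbitSpace Φ (𝒰 l),
        ⋃ (_ : (u (1 : G)).val = U l), (shift G (CoverElt (𝒰 l)) g u (1 : G)).val)
      = {Φ.act g x} := by
  classical
  have part1 : (⋂ l : Λ, U l) = {x} := by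
    apply Set.eq_singleton_iff_unique_mem.mpr
    refine ⟨Set.mem_iInter.mpr hxU, ?_⟩
    intro y hy
    by_contra hne
    set 𝒱 : Finset (Set X) := {({y}ᶜ : Set X), ({x}ᶜ : Set X)} with h𝒱
    have hfoc : IsFOC 𝒱 := by
      constructor
      · intro W hW
        simp only [h𝒱, Finset.mem_insert, Finset.mem_singleton] at hW
        rcases hW with rfl | rfl <;> exact isOpen_compl_singleton
      · apply Set.eq_univ_iff_forall.mpr
        intro p
        by_cases hp : p = x
        · refine Set.mem_sUnion.mpr ⟨({y}ᶜ : Set X), by simp [h𝒱], ?_⟩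
          subst hp
          simp only [Set.mem_compl_iff, Set.mem_singleton_iff]
          exact fun h => hne (h ▸ rfl)
        · exact Set.mem_sUnion.mpr ⟨({x}ᶜ : Set X), by simp [h𝒱], hp⟩
    obtain ⟨l, hl⟩ := hcof 𝒱 hfoc
    obtain ⟨W, hW, hUW⟩ := hl (U l) (hUmem l)
    simp only [h𝒱, Finset.mem_insert, Finset.mem_singleton] at hW
    have hyl : y ∈ U l := Set.mem_iInter.mp hy l
    rcases hW with rfl | rfl
    · exact (hUW hyl) rfl
    · exact (hUW (hxU l)) rfl
  refine ⟨part1, ?_⟩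
  intro g
  apply Set.eq_singleton_iff_unique_mem.mpr
  constructor
  · apply Set.mem_iInter.mpr
    intro l
    have hcov : ∀ p : X, ∃ W, W ∈ 𝒰 l ∧ p ∈ W := by
      intro p
      have h2 := (hFOC l).2
      rw [Set.sUnion_eq_univ_iff] at h2
      obtain ⟨b, hb, hpb⟩ := h2 p
      exact ⟨b, hb, hpb⟩
    choose W hWmem hWp using hcov
    set v : G → CoverElt (𝒰 l) := fun h =>
      if h = 1 then ⟨U l, hUmem l⟩ else ⟨W (Φ.act h x), hWmem _⟩ with hv
    have hval : ∀ h : G, Φ.act h x ∈ (v h).val := by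
      intro h
      by_cases hh : h = 1
      · subst hh
        simp only [hv, if_pos rfl, Φ.act_one]
        exact hxU l
      · simp only [hv, if_neg hh]
        exact hWp _
    have hvmem : v ∈ orbitSpace Φ (𝒰 l) := by
      apply subset_closure
      exact ⟨x, Set.mem_iInter.mpr fun h => (mem_act_inv_image Φ h _ x).mpr (hval h)⟩
    refine Set.mem_iUnion₂.mpr ⟨v, hvmem, ?_⟩
    refine Set.mem_iUnion.mpr ⟨by simp [hv], ?_⟩
    show Φ.act g x ∈ (v (1 * g)).val
    rw [one_mul]
    exact hval g
  · intro y hy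
    by_contra hne
    obtain ⟨V, Wy, hVopen, hWopen, hgxV, hyW, hdisj⟩ :=
      t2_separation (fun h : Φ.act g x = y => hne (h ▸ rfl))
    set 𝒱₁ : Finset (Set X) := {Φ.act g ⁻¹' V, ({x}ᶜ : Set X)} with h𝒱₁
    set 𝒱₂ : Finset (Set X) := {Wy, ({y}ᶜ : Set X)} with h𝒱₂
    have hfoc1 : IsFOC 𝒱₁ := by
      constructor
      · intro A hA
        simp only [h𝒱₁, Finset.mem_insert, Finset.mem_singleton] at hA
        rcases hA with rfl | rfl
        · exact hVopen.preimage (Φ.continuous_act g)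
        · exact isOpen_compl_singleton
      · apply Set.eq_univ_iff_forall.mpr
        intro p
        by_cases hp : p = x
        · refine Set.mem_sUnion.mpr ⟨Φ.act g ⁻¹' V, by simp [h𝒱₁], ?_⟩
          subst hp
          exact hgxV
        · exact Set.mem_sUnion.mpr ⟨({x}ᶜ : Set X), by simp [h𝒱₁], hp⟩
    have hfoc2 : IsFOC 𝒱₂ := by
      constructor
      · intro A hA
        simp only [h𝒱₂, Finset.mem_insert, Finset.mem_singleton] at hA
        rcases hA with rfl | rfl
        · exact hWopen
        · exact isOpen_compl_singleton
      · apply Set.eq_univ_iff_forall.mpr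
        intro p
        by_cases hp : p = y
        · refine Set.mem_sUnion.mpr ⟨Wy, by simp [h𝒱₂], ?_⟩
          subst hp
          exact hyW
        · exact Set.mem_sUnion.mpr ⟨({y}ᶜ : Set X), by simp [h𝒱₂], hp⟩
    obtain ⟨l1, hl1⟩ := hcof _ hfoc1
    obtain ⟨l2, hl2⟩ := hcof _ hfoc2
    obtain ⟨n, hn1, hn2⟩ := hdir l1 l2
    have href1 : Refines (𝒰 n) 𝒱₁ := hn1.trans hl1
    have href2 : Refines (𝒰 n) 𝒱₂ := hn2.trans hl2
    have hy' := Set.mem_iInter.mp hy n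
    obtain ⟨u, hu, hmem⟩ := Set.mem_iUnion₂.mp hy'
    obtain ⟨h1, hmem⟩ := Set.mem_iUnion.mp hmem
    have hmemg : y ∈ (u g).val := by
      have : shift G (CoverElt (𝒰 n)) g u 1 = u g := by simp [shift]
      rwa [this] at hmem
    obtain ⟨w, hw1, hwg⟩ := orbitSpace_witness Φ (𝒰 n) hu g
    obtain ⟨W1, hW1, hsub1⟩ := href1 (U n) (hUmem n)
    simp only [h𝒱₁, Finset.mem_insert, Finset.mem_singleton] at hW1
    have hUnV : U n ⊆ Φ.act g ⁻¹' V := by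
      rcases hW1 with rfl | rfl
      · exact hsub1
      · exact absurd rfl (hsub1 (hxU n))
    rw [h1] at hw1
    have hΦgwV : Φ.act g w ∈ V := hUnV hw1
    obtain ⟨W2, hW2, hsub2⟩ := href2 (u g).val (u g).mem
    simp only [h𝒱₂, Finset.mem_insert, Finset.mem_singleton] at hW2
    rcases hW2 with rfl | rfl
    · exact Set.disjoint_left.mp hdisj hΦgwV (hsub2 hwg)
    · exact (hsub2 hmemg) rfl
end
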